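/- Let E_ε, A_ε ∈ ℝ^{m_ε×n_ε} satisfy rank(λE_ε − A_ε) = m_ε for every λ ∈ ℂ (rank over ℂ) and rank E_ε = m_ε; let J_f ∈ ℝ^{n_f×n_f}; let J_σ ∈ ℝ^{n_σ×n_σ} be nilpotent; let E_η, A_η ∈ ℝ^{m_η×n_η} satisfy rank(λE_η − A_η) = n_η for every λ ∈ ℂ and rank E_η = n_η. Set E = blkdiag(E_ε, I_{n_f}, J_σ, E_η) and A = blkdiag(A_ε, J_f, I_{n_σ}, A_η), both of size m×n with m = m_ε+n_f+n_σ+m_η and n = n_ε+n_f+n_σ+n_η ≥ 1, and let K = [K_ε K_f K_σ K_η] ∈ ℝ^{r×n} be partitioned conformably with the columns of E. Then rank F_{n+1,[E,A]} = rank F_{n+1,[E,A,K]} if and only if K_σ J_σ = 0 and K_ε = 0. -/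

import Mathlib

open Matrix

/-- The block matrix `F_{k,[E,A]}`: viewed as a `k × k` array of `m × n` blocks,
diagonal blocks equal `E`, superdiagonal blocks equal `A`, all other blocks zero. -/
noncomputable def Fmat (k : ℕ) {R C : Type*} [Fintype R] [Fintype C]
    (E A : Matrix R C ℝ) : Matrix (Fin k × R) (Fin k × C) ℝ :=
  Matrix.of fun p q =>
    if q.1.val = p.1.val then E p.2 q.2
    else if q.1.val = p.1.val + 1 then A p.2 q.2
    else 0

/-- The matrix `F_{k,[E,A,K]}`: `F_{k,[E,A]}` with an extra block row appended at the
bottom, having `K` in the second block column and zeros elsewhere. -/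
noncomputable def FmatK (k : ℕ) {R C : Type*} [Fintype R] [Fintype C] {r : ℕ}
    (E A : Matrix R C ℝ) (K : Matrix (Fin r) C ℝ) :
    Matrix ((Fin k × R) ⊕ Fin r) (Fin k × C) ℝ :=
  Matrix.of fun p q =>
    match p with
    | Sum.inl pr => Fmat k E A pr q
    | Sum.inr i => if q.1.val = 1 then K i q.2 else 0

/-- The generalized Wong sequence `W^i_{[E,A,B,C]}`:
`W⁰ = {0}`, `W^{i+1} = E⁻¹(A·W^i + im B) ∩ ker C`. -/
noncomputable def WongW {R : Type*} [Fintype R] {n l p : ℕ}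
    (E A : Matrix R (Fin n) ℝ) (B : Matrix R (Fin l) ℝ) (C : Matrix (Fin p) (Fin n) ℝ) :
    ℕ → Submodule ℝ (Fin n → ℝ)
  | 0 => ⊥
  | i + 1 =>
      (Submodule.comap E.mulVecLin
        (Submodule.map A.mulVecLin (WongW E A B C i) ⊔ LinearMap.range B.mulVecLin)) ⊓
        LinearMap.ker C.mulVecLin

/-- The generalized Wong sequence `V^i_{[E,A,B,C]}`:
`V⁰ = ker C`, `V^{i+1} = A⁻¹(E·V^i + im B) ∩ ker C`. -/
noncomputable def WongV {R : Type*} [Fintype R] {n l p : ℕ}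
    (E A : Matrix R (Fin n) ℝ) (B : Matrix R (Fin l) ℝ) (C : Matrix (Fin p) (Fin n) ℝ) :
    ℕ → Submodule ℝ (Fin n → ℝ)
  | 0 => LinearMap.ker C.mulVecLin
  | i + 1 =>
      (Submodule.comap A.mulVecLin
        (Submodule.map E.mulVecLin (WongV E A B C i) ⊔ LinearMap.range B.mulVecLin)) ⊓
        LinearMap.ker C.mulVecLin

/-! ### Auxiliary lemmas -/

section RankSurjInj

variable {K : Type*} [Field K]

lemma aux_surj_of_rank_rows {m n : ℕ} (M : Matrix (Fin m) (Fin n) K) (h : M.rank = m) :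
    Function.Surjective M.mulVecLin := by
  rw [← LinearMap.range_eq_top]
  apply Submodule.eq_top_of_finrank_eq
  rw [Matrix.rank] at h
  simp [h, Module.finrank_pi]

lemma aux_inj_of_rank_cols {m n : ℕ} (M : Matrix (Fin m) (Fin n) K) (h : M.rank = n) :
    Function.Injective M.mulVecLin := by
  rw [← LinearMap.ker_eq_bot]
  have h2 := LinearMap.finrank_range_add_finrank_ker M.mulVecLin
  rw [Matrix.rank] at h
  rw [h] at h2
  simp only [Module.finrank_pi, Module.finrank_fintype_fun_eq_card, Fintype.card_fin] at h2
  have : Module.finrank K (LinearMap.ker M.mulVecLin) = 0 := by omega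
  exact Submodule.finrank_eq_zero.mp this

end RankSurjInj

section Complexify

variable {m n : ℕ} (E : Matrix (Fin m) (Fin n) ℝ)

lemma aux_mulVec_map_re (z : Fin n → ℂ) (i : Fin m) :
    ((E.map Complex.ofReal).mulVec z i).re = E.mulVec (fun c => (z c).re) i := by
  simp only [mulVec, dotProduct, map_apply, Complex.re_sum, Complex.re_ofReal_mul]

lemma aux_mulVec_map_im (z : Fin n → ℂ) (i : Fin m) :
    ((E.map Complex.ofReal).mulVec z i).im = E.mulVec (fun c => (z c).im) i := by
  simp only [mulVec, dotProduct, map_apply, Complex.im_sum, Complex.im_ofReal_mul]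

lemma aux_map_surj_of_surj (hs : Function.Surjective E.mulVecLin) :
    Function.Surjective (E.map Complex.ofReal).mulVecLin := by
  intro b
  obtain ⟨x, hx⟩ := hs fun i => (b i).re
  obtain ⟨y, hy⟩ := hs fun i => (b i).im
  refine ⟨fun c => ⟨x c, y c⟩, funext fun i => Complex.ext ?_ ?_⟩
  · rw [mulVecLin_apply, aux_mulVec_map_re]
    exact congrFun hx i
  · rw [mulVecLin_apply, aux_mulVec_map_im]
    exact congrFun hy i

lemma aux_map_inj_of_inj (hs : Function.Injective E.mulVecLin) :
    Function.Injective (E.map Complex.ofReal).mulVecLin := by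
  rw [← LinearMap.ker_eq_bot] at hs ⊢
  rw [Submodule.eq_bot_iff] at hs ⊢
  intro z hz
  have h0 : ∀ i, (E.map Complex.ofReal).mulVec z i = 0 := fun i => congrFun hz i
  have hre : (fun c => (z c).re) = 0 := hs _ (funext fun i => by
    rw [mulVecLin_apply, ← aux_mulVec_map_re, h0 i, Complex.zero_re]; rfl)
  have him : (fun c => (z c).im) = 0 := hs _ (funext fun i => by
    rw [mulVecLin_apply, ← aux_mulVec_map_im, h0 i, Complex.zero_im]; rfl)
  funext c
  exact Complex.ext (congrFun hre c) (congrFun him c)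

end Complexify

lemma aux_pencil_mulVecLin {m n : ℕ} (M N : Matrix (Fin m) (Fin n) ℂ) (μ : ℂ) (x : Fin n → ℂ) :
    (μ • M - N).mulVecLin x = μ • M.mulVecLin x - N.mulVecLin x := by
  simp [Matrix.sub_mulVec, Matrix.smul_mulVec]

lemma aux_stable_top {m n : ℕ} (M N : Matrix (Fin m) (Fin n) ℂ)
    (hM : Function.Surjective M.mulVecLin)
    (hpencil : ∀ lam : ℂ, Function.Surjective ((lam • M - N)).mulVecLin)
    (W : Submodule ℂ (Fin n → ℂ))
    (hstab : Submodule.comap M.mulVecLin (Submodule.map N.mulVecLin W) = W) :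
    W = ⊤ := by
  by_contra hW
  set M' := M.mulVecLin with hM'
  set N' := N.mulVecLin with hN'
  set U := Submodule.map N' W with hU
  have hMWU : W ≤ Submodule.comap M' U := hstab.ge
  have hNWU : W ≤ Submodule.comap N' U := fun x hx => Submodule.mem_map_of_mem hx
  set Mbar := Submodule.mapQ W U M' hMWU with hMbar
  set Nbar := Submodule.mapQ W U N' hNWU with hNbar
  have hMbar_inj : Function.Injective Mbar := by
    rw [← LinearMap.ker_eq_bot, Submodule.eq_bot_iff]
    intro xq hxq
    obtain ⟨x, rfl⟩ := Submodule.Quotient.mk_surjective W xq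
    rw [LinearMap.mem_ker, hMbar, Submodule.mapQ_apply, Submodule.Quotient.mk_eq_zero] at hxq
    rw [Submodule.Quotient.mk_eq_zero, ← hstab]
    exact hxq
  have hMbar_surj : Function.Surjective Mbar := by
    intro yq
    obtain ⟨y, rfl⟩ := Submodule.Quotient.mk_surjective U yq
    obtain ⟨x, rfl⟩ := hM y
    exact ⟨Submodule.Quotient.mk x, Submodule.mapQ_apply _ _ _ _⟩
  set e := LinearEquiv.ofBijective Mbar ⟨hMbar_inj, hMbar_surj⟩ with he
  have hfr : Module.finrank ℂ ((Fin n → ℂ) ⧸ W) = Module.finrank ℂ ((Fin m → ℂ) ⧸ U) :=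
    e.finrank_eq
  have hnt : Nontrivial ((Fin n → ℂ) ⧸ W) :=
    Submodule.Quotient.nontrivial_iff.mpr (lt_top_iff_ne_top.mpr hW).ne
  set f : Module.End ℂ ((Fin n → ℂ) ⧸ W) := (e.symm : _ →ₗ[ℂ] _) ∘ₗ Nbar with hf
  obtain ⟨μ, hμ⟩ := Module.End.exists_eigenvalue f
  obtain ⟨v, hv⟩ := hμ.exists_hasEigenvector
  have hforward : Nbar v = μ • Mbar v := by
    have h1 : f v = μ • v := hv.apply_eq_smul
    have h2 := congrArg e h1
    have h3 : e (f v) = Nbar v := by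
      rw [hf]
      simp only [LinearMap.coe_comp, Function.comp_apply, LinearEquiv.coe_coe]
      exact e.apply_symm_apply _
    have h4 : e (μ • v) = μ • Mbar v := by
      rw [_root_.map_smul]
      rfl
    rw [← h3, h2, h4]
  have hPW : W ≤ Submodule.comap (μ • M - N).mulVecLin U := by
    intro x hx
    rw [Submodule.mem_comap, aux_pencil_mulVecLin]
    exact U.sub_mem (U.smul_mem _ (hMWU hx)) (hNWU hx)
  set Pbar := Submodule.mapQ W U (μ • M - N).mulVecLin hPW with hPbar
  have hPeq : ∀ xq, Pbar xq = μ • Mbar xq - Nbar xq := by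
    intro xq
    obtain ⟨x, rfl⟩ := Submodule.Quotient.mk_surjective W xq
    rw [hPbar, Submodule.mapQ_apply, aux_pencil_mulVecLin, hMbar, hNbar,
      Submodule.mapQ_apply, Submodule.mapQ_apply]
    simp [M', N', Matrix.mulVecLin_apply, Submodule.Quotient.mk_sub, Submodule.Quotient.mk_smul]
  have hPsurj : Function.Surjective Pbar := by
    intro yq
    obtain ⟨y, rfl⟩ := Submodule.Quotient.mk_surjective U yq
    obtain ⟨x, rfl⟩ := hpencil μ y
    exact ⟨Submodule.Quotient.mk x, Submodule.mapQ_apply _ _ _ _⟩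
  have hPinj : Function.Injective Pbar :=
    (LinearMap.injective_iff_surjective_of_finrank_eq_finrank hfr).mpr hPsurj
  have hker : Pbar v = 0 := by
    rw [hPeq, hforward]
    exact sub_self _
  exact hv.right (hPinj (by rw [hker, map_zero]))

/-- Wong-type reachability sequence. -/
noncomputable def Tseq {m n : ℕ} (M N : Matrix (Fin m) (Fin n) ℂ) : ℕ → Submodule ℂ (Fin n → ℂ)
  | 0 => LinearMap.ker M.mulVecLin
  | j + 1 => Submodule.comap M.mulVecLin (Submodule.map N.mulVecLin (Tseq M N j))

lemma Tseq_mono {m n : ℕ} (M N : Matrix (Fin m) (Fin n) ℂ) : Monotone (Tseq M N) := by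
  apply monotone_nat_of_le_succ
  intro j
  induction j with
  | zero =>
      intro x hx
      have hx' : M.mulVecLin x = 0 := hx
      simp only [Tseq, Submodule.mem_comap]
      rw [hx']
      exact Submodule.zero_mem _
  | succ j ih =>
      exact Submodule.comap_mono (Submodule.map_mono ih)

lemma Tseq_chain {m n : ℕ} (M N : Matrix (Fin m) (Fin n) ℂ) (j : ℕ) (v : Fin n → ℂ)
    (hv : v ∈ Tseq M N j) :
    ∃ w : ℕ → (Fin n → ℂ), w 0 = v ∧
      (∀ t, t < j → M.mulVec (w t) + N.mulVec (w (t + 1)) = 0) ∧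
      M.mulVec (w j) = 0 := by
  induction j generalizing v with
  | zero =>
      exact ⟨fun _ => v, rfl, fun t ht => absurd ht (Nat.not_lt_zero t), hv⟩
  | succ j ih =>
      rw [Tseq, Submodule.mem_comap, Submodule.mem_map] at hv
      obtain ⟨y, hy, hMy⟩ := hv
      obtain ⟨w', hw0, hwchain, hwend⟩ := ih (-y) (Submodule.neg_mem _ hy)
      refine ⟨fun t => if t = 0 then v else w' (t - 1), by simp, ?_, ?_⟩
      · intro t ht
        cases t with
        | zero =>
            have hMy' : N.mulVec y = M.mulVec v := hMy
            have h1 : (if (0:ℕ) = 0 then v else w' (0-1)) = v := if_pos rfl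
            have h2 : (if (0+1:ℕ) = 0 then v else w' (0+1-1)) = w' 0 := by norm_num
            show M.mulVec (if (0:ℕ) = 0 then v else w' (0-1)) +
              N.mulVec (if (0+1:ℕ) = 0 then v else w' (0+1-1)) = 0
            rw [h1, h2, hw0, Matrix.mulVec_neg, ← hMy']
            exact add_neg_cancel _
        | succ t =>
            show M.mulVec (if t+1 = 0 then v else w' (t+1-1)) +
              N.mulVec (if t+1+1 = 0 then v else w' (t+1+1-1)) = 0
            rw [if_neg (Nat.succ_ne_zero t), if_neg (Nat.succ_ne_zero (t+1))]
            simpa using hwchain t (by omega)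
      · show M.mulVec (if j+1 = 0 then v else w' (j+1-1)) = 0
        rw [if_neg (Nat.succ_ne_zero j)]
        simpa using hwend

lemma Tseq_finrank_le_of_strict {m n : ℕ} (M N : Matrix (Fin m) (Fin n) ℂ)
    (l : ℕ) (h : ∀ j < l, Tseq M N j ≠ Tseq M N (j + 1)) :
    Module.finrank ℂ (Tseq M N 0) + l ≤ Module.finrank ℂ (Tseq M N l) := by
  induction l with
  | zero => simp
  | succ l ih =>
      have h1 : ∀ j < l, Tseq M N j ≠ Tseq M N (j + 1) := fun j hj => h j (by omega)
      have h2 := ih h1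
      have hlt : Tseq M N l < Tseq M N (l + 1) :=
        lt_of_le_of_ne (Tseq_mono M N (Nat.le_succ l)) (h l (by omega))
      have := Submodule.finrank_lt_finrank_of_lt hlt
      omega

lemma aux_chain_exists {m n : ℕ} (E A : Matrix (Fin m) (Fin n) ℝ)
    (hp : ∀ lam : ℂ, ((lam • E.map Complex.ofReal - A.map Complex.ofReal)).rank = m)
    (hE : E.rank = m) (j : ℕ) (hj : n ≤ j + 1) (v : Fin n → ℝ) :
    ∃ w : ℕ → (Fin n → ℝ), w 0 = v ∧
      (∀ t, t < j → E.mulVec (w t) + A.mulVec (w (t + 1)) = 0) ∧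
      E.mulVec (w j) = 0 := by
  rcases Nat.eq_zero_or_pos n with hn0 | hn1
  · subst hn0
    refine ⟨fun _ => v, rfl, ?_, ?_⟩
    · intro t _
      funext i
      simp [Matrix.mulVec, dotProduct]
    · funext i
      simp [Matrix.mulVec, dotProduct]
  · set M := E.map Complex.ofReal with hM
    set N := A.map Complex.ofReal with hN
    have hMsurj : Function.Surjective M.mulVecLin :=
      aux_map_surj_of_surj E (aux_surj_of_rank_rows E hE)
    have hpsurj : ∀ lam : ℂ, Function.Surjective ((lam • M - N)).mulVecLin :=
      fun lam => aux_surj_of_rank_rows _ (hp lam)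
    have hmn : m < n := by
      by_contra hge
      push_neg at hge
      have hmn' : m = n := le_antisymm (hE ▸ E.rank_le_width) hge
      have hinj : Function.Injective M.mulVecLin :=
        aux_map_inj_of_inj E (aux_inj_of_rank_cols E (by rw [hE, hmn']))
      have hker : LinearMap.ker M.mulVecLin = ⊥ := LinearMap.ker_eq_bot.mpr hinj
      have hstab : Submodule.comap M.mulVecLin
          (Submodule.map N.mulVecLin (⊥ : Submodule ℂ (Fin n → ℂ))) = ⊥ := by
        rw [Submodule.map_bot, Submodule.comap_bot, hker]
      have := aux_stable_top M N hMsurj hpsurj ⊥ hstab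
      have h0 : Module.finrank ℂ (⊥ : Submodule ℂ (Fin n → ℂ)) =
          Module.finrank ℂ (⊤ : Submodule ℂ (Fin n → ℂ)) := by rw [this]
      rw [finrank_bot, finrank_top, Module.finrank_pi] at h0
      simp at h0
      omega
    have hstab : ∃ j0, j0 ≤ m ∧ Tseq M N j0 = Tseq M N (j0 + 1) := by
      by_contra hc
      push_neg at hc
      have hstrict : ∀ j' < m + 1, Tseq M N j' ≠ Tseq M N (j' + 1) :=
        fun j' hj' => hc j' (by omega)
      have h1 := Tseq_finrank_le_of_strict M N (m + 1) hstrict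
      have h2 : Module.finrank ℂ (Tseq M N (m + 1)) ≤ n := by
        have := Submodule.finrank_le (Tseq M N (m + 1))
        simpa [Module.finrank_pi] using this
      have h3 := LinearMap.finrank_range_add_finrank_ker M.mulVecLin
      have h4 : Module.finrank ℂ (LinearMap.range M.mulVecLin) ≤ m := by
        have := Submodule.finrank_le (LinearMap.range M.mulVecLin)
        simpa [Module.finrank_pi] using this
      simp only [Module.finrank_fintype_fun_eq_card, Fintype.card_fin] at h3
      have h5 : Module.finrank ℂ (Tseq M N 0) =
          Module.finrank ℂ (LinearMap.ker M.mulVecLin) := rfl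
      omega
    obtain ⟨j0, hj0m, hj0⟩ := hstab
    have htop : Tseq M N j0 = ⊤ := aux_stable_top M N hMsurj hpsurj _ hj0.symm
    have htopj : Tseq M N j = ⊤ := by
      have hle : j0 ≤ j := by omega
      exact top_le_iff.mp (htop ▸ Tseq_mono M N hle)
    have hv : (fun c => (v c : ℂ)) ∈ Tseq M N j := htopj ▸ Submodule.mem_top
    obtain ⟨wc, hw0, hwchain, hwend⟩ := Tseq_chain M N j _ hv
    refine ⟨fun t c => (wc t c).re, ?_, ?_, ?_⟩
    · funext c
      show (wc 0 c).re = v c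
      rw [hw0]
      exact Complex.ofReal_re _
    · intro t ht
      funext i
      have := congrFun (hwchain t ht) i
      rw [Pi.add_apply] at this
      have h0 : ((M.mulVec (wc t) i) + (N.mulVec (wc (t+1)) i)).re = 0 := by
        rw [this]; rfl
      rw [Complex.add_re, aux_mulVec_map_re E, aux_mulVec_map_re A] at h0
      exact h0
    · funext i
      have := congrFun hwend i
      have h0 : (M.mulVec (wc j) i).re = 0 := by rw [this]; rfl
      rw [aux_mulVec_map_re E] at h0
      exact h0

lemma Fmat_mulVec_apply {k : ℕ} {R C : Type*} [Fintype R] [Fintype C]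
    (E A : Matrix R C ℝ) (x : Fin k × C → ℝ) (i : Fin k) (r : R) :
    (Fmat k E A).mulVec x (i, r) =
      E.mulVec (fun c => x (i, c)) r +
        (if h : i.val + 1 < k then A.mulVec (fun c => x (⟨i.val + 1, h⟩, c)) r else 0) := by
  have lhs : (Fmat k E A).mulVec x (i, r)
      = ∑ j : Fin k, ∑ c : C,
          (if j.val = i.val then E r c else if j.val = i.val + 1 then A r c else 0) * x (j, c) := by
    rw [Matrix.mulVec, dotProduct, Fintype.sum_prod_type]
    rfl
  rw [lhs]
  have step : ∀ j : Fin k,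
      (∑ c : C, (if j.val = i.val then E r c else if j.val = i.val + 1 then A r c else 0) * x (j, c))
      = (if j = i then E.mulVec (fun c => x (i, c)) r else 0)
        + (if j.val = i.val + 1 then A.mulVec (fun c => x (j, c)) r else 0) := by
    intro j
    by_cases h1 : j.val = i.val
    · have hji : j = i := Fin.ext h1
      subst hji
      rw [if_pos rfl, if_neg (by omega : ¬ j.val = j.val + 1), add_zero]
      simp only [if_pos h1]
      rfl
    · by_cases h2 : j.val = i.val + 1
      · rw [if_neg (fun h => h1 (Fin.val_eq_of_eq h)), if_pos h2, zero_add]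
        simp only [if_neg h1, if_pos h2]
        rfl
      · rw [if_neg (fun h => h1 (Fin.val_eq_of_eq h)), if_neg h2, add_zero]
        simp [if_neg h1, if_neg h2]
  rw [Finset.sum_congr rfl (fun j _ => step j), Finset.sum_add_distrib]
  congr 1
  · rw [Finset.sum_ite_eq' Finset.univ i]
    simp
  · by_cases h : i.val + 1 < k
    · rw [dif_pos h]
      rw [Finset.sum_eq_single (⟨i.val + 1, h⟩ : Fin k)]
      · rw [if_pos rfl]
      · intro j _ hj
        rw [if_neg (fun hc => hj (Fin.ext (by simpa using hc)))]
      · intro habs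
        exact absurd (Finset.mem_univ _) habs
    · rw [dif_neg h]
      apply Finset.sum_eq_zero
      intro j _
      rw [if_neg (by omega : ¬ j.val = i.val + 1)]

lemma FmatK_mulVec_inl {k : ℕ} {R C : Type*} [Fintype R] [Fintype C] {r : ℕ}
    (E A : Matrix R C ℝ) (K : Matrix (Fin r) C ℝ) (x : Fin k × C → ℝ) (p : Fin k × R) :
    (FmatK k E A K).mulVec x (Sum.inl p) = (Fmat k E A).mulVec x p := rfl

lemma FmatK_mulVec_inr {k : ℕ} {R C : Type*} [Fintype R] [Fintype C] {r : ℕ}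
    (E A : Matrix R C ℝ) (K : Matrix (Fin r) C ℝ) (hk : 1 < k) (x : Fin k × C → ℝ) (i : Fin r) :
    (FmatK k E A K).mulVec x (Sum.inr i) = K.mulVec (fun c => x (⟨1, hk⟩, c)) i := by
  have lhs : (FmatK k E A K).mulVec x (Sum.inr i)
      = ∑ j : Fin k, ∑ c : C, (if j.val = 1 then K i c else 0) * x (j, c) := by
    rw [Matrix.mulVec, dotProduct, Fintype.sum_prod_type]
    rfl
  rw [lhs]
  rw [Finset.sum_eq_single (⟨1, hk⟩ : Fin k)]
  · simp only [if_pos rfl]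
    rfl
  · intro j _ hj
    apply Finset.sum_eq_zero
    intro c _
    rw [if_neg (fun hc => hj (Fin.ext (by simpa using hc))), zero_mul]
  · intro habs
    exact absurd (Finset.mem_univ _) habs

lemma rank_iff_ker {k : ℕ} {R C : Type*} [Fintype R] [Fintype C] {r : ℕ}
    (E A : Matrix R C ℝ) (K : Matrix (Fin r) C ℝ) (hk : 1 < k) :
    (Fmat k E A).rank = (FmatK k E A K).rank ↔
      ∀ x : Fin k × C → ℝ, (Fmat k E A).mulVec x = 0 →
        K.mulVec (fun c => x (⟨1, hk⟩, c)) = 0 := by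
  have hkerle : LinearMap.ker (FmatK k E A K).mulVecLin ≤
      LinearMap.ker (Fmat k E A).mulVecLin := by
    intro x hx
    rw [LinearMap.mem_ker] at hx ⊢
    rw [Matrix.mulVecLin_apply] at hx ⊢
    funext p
    have := congrFun hx (Sum.inl p)
    rw [FmatK_mulVec_inl] at this
    exact this
  have hrnF := LinearMap.finrank_range_add_finrank_ker (Fmat k E A).mulVecLin
  have hrnG := LinearMap.finrank_range_add_finrank_ker (FmatK k E A K).mulVecLin
  have hFr : (Fmat k E A).rank =
      Module.finrank ℝ (LinearMap.range (Fmat k E A).mulVecLin) := rfl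
  have hGr : (FmatK k E A K).rank =
      Module.finrank ℝ (LinearMap.range (FmatK k E A K).mulVecLin) := rfl
  constructor
  · intro h x hx
    have hfr : Module.finrank ℝ (LinearMap.ker (FmatK k E A K).mulVecLin) =
        Module.finrank ℝ (LinearMap.ker (Fmat k E A).mulVecLin) := by omega
    have hkereq := Submodule.eq_of_le_of_finrank_eq hkerle hfr
    have hxm : x ∈ LinearMap.ker (Fmat k E A).mulVecLin := by
      rw [LinearMap.mem_ker, Matrix.mulVecLin_apply, hx]
    rw [← hkereq, LinearMap.mem_ker, Matrix.mulVecLin_apply] at hxm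
    funext i
    have := congrFun hxm (Sum.inr i)
    rw [FmatK_mulVec_inr E A K hk] at this
    exact this
  · intro h
    have hle2 : LinearMap.ker (Fmat k E A).mulVecLin ≤
        LinearMap.ker (FmatK k E A K).mulVecLin := by
      intro x hx
      rw [LinearMap.mem_ker, Matrix.mulVecLin_apply] at hx ⊢
      funext p
      cases p with
      | inl p => rw [FmatK_mulVec_inl, hx]; rfl
      | inr i =>
          rw [FmatK_mulVec_inr E A K hk]
          have := h x hx
          rw [this]
          rfl
    have hkereq := le_antisymm hkerle hle2
    rw [hkereq] at hrnG
    omega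

lemma blk_mulVec_inl {R1 C1 R2 C2 : Type*} [Fintype C1] [Fintype C2]
    (B1 : Matrix R1 C1 ℝ) (B2 : Matrix R2 C2 ℝ) (y : C1 ⊕ C2 → ℝ) (s : R1) :
    (fromBlocks B1 0 0 B2).mulVec y (Sum.inl s) = B1.mulVec (fun c => y (Sum.inl c)) s := by
  have hy : y = Sum.elim (fun c => y (Sum.inl c)) (fun c => y (Sum.inr c)) := by
    funext q; cases q <;> rfl
  rw [hy, fromBlocks_mulVec]
  simp

lemma blk_mulVec_inr {R1 C1 R2 C2 : Type*} [Fintype C1] [Fintype C2]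
    (B1 : Matrix R1 C1 ℝ) (B2 : Matrix R2 C2 ℝ) (y : C1 ⊕ C2 → ℝ) (s : R2) :
    (fromBlocks B1 0 0 B2).mulVec y (Sum.inr s) = B2.mulVec (fun c => y (Sum.inr c)) s := by
  have hy : y = Sum.elim (fun c => y (Sum.inl c)) (fun c => y (Sum.inr c)) := by
    funext q; cases q <;> rfl
  rw [hy, fromBlocks_mulVec]
  simp

lemma cols_mulVec {R1 C1 C2 : Type*} [Fintype C1] [Fintype C2]
    (K1 : Matrix R1 C1 ℝ) (K2 : Matrix R1 C2 ℝ) (y : C1 ⊕ C2 → ℝ) :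
    (fromCols K1 K2).mulVec y =
      K1.mulVec (fun c => y (Sum.inl c)) + K2.mulVec (fun c => y (Sum.inr c)) := by
  have hy : y = Sum.elim (fun c => y (Sum.inl c)) (fun c => y (Sum.inr c)) := by
    funext q; cases q <;> rfl
  conv_lhs => rw [hy]
  rw [fromCols_mulVec_sumElim]

lemma nilpotent_pow_card {p : ℕ} (J : Matrix (Fin p) (Fin p) ℝ) (h : IsNilpotent J) :
    J ^ p = 0 := by
  have hφ : IsNilpotent (Matrix.toLinAlgEquiv' J) :=
    h.map (Matrix.toLinAlgEquiv' (R := ℝ) (n := Fin p)).toAlgHom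
  have hch := hφ.charpoly_eq_X_pow_finrank
  have hp0 : (Matrix.toLinAlgEquiv' J) ^ p = 0 := by
    have := LinearMap.aeval_self_charpoly (Matrix.toLinAlgEquiv' J)
    rw [hch] at this
    simpa [Module.finrank_pi] using this
  have : Matrix.toLinAlgEquiv' (J ^ p) = Matrix.toLinAlgEquiv' (0 : Matrix (Fin p) (Fin p) ℝ) := by
    rw [map_pow, map_zero, hp0]
  exact Matrix.toLinAlgEquiv'.injective this

/-! ### Block-diagonal and block-column helper lemmas -/

section blk4
variable {R1 C1 R2 C2 R3 C3 R4 C4 : Type*}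
  [Fintype C1] [Fintype C2] [Fintype C3] [Fintype C4]
  (B1 : Matrix R1 C1 ℝ) (B2 : Matrix R2 C2 ℝ) (B3 : Matrix R3 C3 ℝ) (B4 : Matrix R4 C4 ℝ)
  (y : C1 ⊕ (C2 ⊕ (C3 ⊕ C4)) → ℝ)

lemma blk4_1 (s : R1) :
    (fromBlocks B1 0 0 (fromBlocks B2 0 0 (fromBlocks B3 0 0 B4))).mulVec y (Sum.inl s)
      = B1.mulVec (fun c => y (Sum.inl c)) s :=
  blk_mulVec_inl _ _ _ _

lemma blk4_2 (s : R2) :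
    (fromBlocks B1 0 0 (fromBlocks B2 0 0 (fromBlocks B3 0 0 B4))).mulVec y
        (Sum.inr (Sum.inl s))
      = B2.mulVec (fun c => y (Sum.inr (Sum.inl c))) s :=
  (blk_mulVec_inr _ _ _ _).trans (blk_mulVec_inl _ _ _ _)

lemma blk4_3 (s : R3) :
    (fromBlocks B1 0 0 (fromBlocks B2 0 0 (fromBlocks B3 0 0 B4))).mulVec y
        (Sum.inr (Sum.inr (Sum.inl s)))
      = B3.mulVec (fun c => y (Sum.inr (Sum.inr (Sum.inl c)))) s :=
  (blk_mulVec_inr _ _ _ _).trans ((blk_mulVec_inr _ _ _ _).trans (blk_mulVec_inl _ _ _ _))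

lemma blk4_4 (s : R4) :
    (fromBlocks B1 0 0 (fromBlocks B2 0 0 (fromBlocks B3 0 0 B4))).mulVec y
        (Sum.inr (Sum.inr (Sum.inr s)))
      = B4.mulVec (fun c => y (Sum.inr (Sum.inr (Sum.inr c)))) s :=
  (blk_mulVec_inr _ _ _ _).trans ((blk_mulVec_inr _ _ _ _).trans (blk_mulVec_inr _ _ _ _))

end blk4

lemma cols4 {R0 C1 C2 C3 C4 : Type*} [Fintype C1] [Fintype C2] [Fintype C3] [Fintype C4]
    (K1 : Matrix R0 C1 ℝ) (K2 : Matrix R0 C2 ℝ) (K3 : Matrix R0 C3 ℝ) (K4 : Matrix R0 C4 ℝ)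
    (y : C1 ⊕ (C2 ⊕ (C3 ⊕ C4)) → ℝ) :
    (fromCols K1 (fromCols K2 (fromCols K3 K4))).mulVec y
      = K1.mulVec (fun c => y (Sum.inl c))
        + (K2.mulVec (fun c => y (Sum.inr (Sum.inl c)))
          + (K3.mulVec (fun c => y (Sum.inr (Sum.inr (Sum.inl c))))
            + K4.mulVec (fun c => y (Sum.inr (Sum.inr (Sum.inr c)))))) := by
  rw [cols_mulVec, cols_mulVec, cols_mulVec]

lemma mulVec_zfun {R C : Type*} [Fintype C] (M : Matrix R C ℝ) (s : R) :
    M.mulVec (fun _ => (0:ℝ)) s = 0 := congrFun (Matrix.mulVec_zero M) s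

/-- Lemma 3.8: for `E = blkdiag(E_ε, I, J_σ, E_η)`, `A = blkdiag(A_ε, J_f, I, A_η)` in
quasi-Kronecker form and `K = [K_ε K_f K_σ K_η]`, the rank condition
`rank F_{n+1,[E,A]} = rank F_{n+1,[E,A,K]}` holds iff `K_σ J_σ = 0` and `K_ε = 0`. -/
theorem stmt_2 {mε nε nf nσ mη nη r : ℕ}
    (Eε Aε : Matrix (Fin mε) (Fin nε) ℝ)
    (Jf : Matrix (Fin nf) (Fin nf) ℝ)
    (Jσ : Matrix (Fin nσ) (Fin nσ) ℝ)
    (Eη Aη : Matrix (Fin mη) (Fin nη) ℝ)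
    (Kε : Matrix (Fin r) (Fin nε) ℝ) (Kf : Matrix (Fin r) (Fin nf) ℝ)
    (Kσ : Matrix (Fin r) (Fin nσ) ℝ) (Kη : Matrix (Fin r) (Fin nη) ℝ)
    (hεpencil : ∀ lam : ℂ,
      (lam • Eε.map Complex.ofReal - Aε.map Complex.ofReal).rank = mε)
    (hEε : Eε.rank = mε)
    (hJσ : IsNilpotent Jσ)
    (hηpencil : ∀ lam : ℂ,
      (lam • Eη.map Complex.ofReal - Aη.map Complex.ofReal).rank = nη)
    (hEη : Eη.rank = nη)
    (n : ℕ) (hn : n = nε + nf + nσ + nη) (hn1 : 1 ≤ n) :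
    (Fmat (n + 1)
        (Matrix.fromBlocks Eε 0 0
          (Matrix.fromBlocks (1 : Matrix (Fin nf) (Fin nf) ℝ) 0 0
            (Matrix.fromBlocks Jσ 0 0 Eη)))
        (Matrix.fromBlocks Aε 0 0
          (Matrix.fromBlocks Jf 0 0
            (Matrix.fromBlocks (1 : Matrix (Fin nσ) (Fin nσ) ℝ) 0 0 Aη)))).rank =
      (FmatK (n + 1)
        (Matrix.fromBlocks Eε 0 0
          (Matrix.fromBlocks (1 : Matrix (Fin nf) (Fin nf) ℝ) 0 0
            (Matrix.fromBlocks Jσ 0 0 Eη)))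
        (Matrix.fromBlocks Aε 0 0
          (Matrix.fromBlocks Jf 0 0
            (Matrix.fromBlocks (1 : Matrix (Fin nσ) (Fin nσ) ℝ) 0 0 Aη)))
        (Matrix.fromCols Kε (Matrix.fromCols Kf (Matrix.fromCols Kσ Kη)))).rank ↔
    Kσ * Jσ = 0 ∧ Kε = 0 := by
  have hk : 1 < n + 1 := by omega
  rw [rank_iff_ker _ _ _ hk]
  set E0 := Matrix.fromBlocks Eε 0 0
      (Matrix.fromBlocks (1 : Matrix (Fin nf) (Fin nf) ℝ) 0 0
        (Matrix.fromBlocks Jσ 0 0 Eη)) with hE0def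
  set A0 := Matrix.fromBlocks Aε 0 0
      (Matrix.fromBlocks Jf 0 0
        (Matrix.fromBlocks (1 : Matrix (Fin nσ) (Fin nσ) ℝ) 0 0 Aη)) with hA0def
  set K0 := Matrix.fromCols Kε (Matrix.fromCols Kf (Matrix.fromCols Kσ Kη)) with hK0def
  constructor
  · -- rank condition implies the two equations
    intro P
    have hJp : Jσ ^ nσ = 0 := nilpotent_pow_card Jσ hJσ
    have hJn1 : Jσ ^ (n + 1) = 0 := by
      have h1 : n + 1 = (n + 1 - nσ) + nσ := by omega
      rw [h1, pow_add, hJp, mul_zero]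
    constructor
    · -- Kσ * Jσ = 0
      have key : ∀ u : Fin nσ → ℝ, (Kσ * Jσ).mulVec u = 0 := by
        intro u
        set x : Fin (n + 1) × (Fin nε ⊕ (Fin nf ⊕ (Fin nσ ⊕ Fin nη))) → ℝ :=
          fun p => Sum.elim (fun _ => (0:ℝ))
            (Sum.elim (fun _ => (0:ℝ))
              (Sum.elim (fun c => ((-1:ℝ))^(p.1 : ℕ) * ((Jσ ^ (p.1 : ℕ)).mulVec u) c)
                (fun _ => (0:ℝ)))) p.2 with hxdef
        have hsig : ∀ (i : Fin (n+1)),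
            (fun c => x (i, Sum.inr (Sum.inr (Sum.inl c))))
              = ((-1:ℝ))^(i : ℕ) • ((Jσ ^ (i : ℕ)).mulVec u) := fun i => rfl
        have hx0 : (Fmat (n + 1) E0 A0).mulVec x = 0 := by
          funext p
          obtain ⟨i, rr⟩ := p
          rw [Fmat_mulVec_apply]
          show E0.mulVec (fun c => x (i, c)) rr
            + (if h : (i : ℕ) + 1 < n + 1
                then A0.mulVec (fun c => x (⟨(i:ℕ) + 1, h⟩, c)) rr else 0) = 0
          rcases rr with rε | rf | rσ | rη
          · by_cases h : (i : ℕ) + 1 < n + 1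
            · rw [dif_pos h, hE0def, hA0def]
              simp only [blk4_1]
              show Eε.mulVec (fun _ => (0:ℝ)) rε + Aε.mulVec (fun _ => (0:ℝ)) rε = 0
              rw [mulVec_zfun, mulVec_zfun, add_zero]
            · rw [dif_neg h, add_zero, hE0def]
              simp only [blk4_1]
              show Eε.mulVec (fun _ => (0:ℝ)) rε = 0
              exact mulVec_zfun _ _
          · by_cases h : (i : ℕ) + 1 < n + 1
            · rw [dif_pos h, hE0def, hA0def]
              simp only [blk4_2, Matrix.one_mulVec]
              show x (i, Sum.inr (Sum.inl rf)) + Jf.mulVec (fun _ => (0:ℝ)) rf = 0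
              rw [mulVec_zfun, add_zero]
              rfl
            · rw [dif_neg h, add_zero, hE0def]
              simp only [blk4_2, Matrix.one_mulVec]
              rfl
          · by_cases h : (i : ℕ) + 1 < n + 1
            · rw [dif_pos h, hE0def, hA0def]
              simp only [blk4_3, Matrix.one_mulVec]
              show Jσ.mulVec (((-1:ℝ))^(i : ℕ) • ((Jσ ^ (i : ℕ)).mulVec u)) rσ
                + (((-1:ℝ))^((i:ℕ)+1) • ((Jσ ^ ((i:ℕ)+1)).mulVec u)) rσ = 0
              rw [Matrix.mulVec_smul, Matrix.mulVec_mulVec, ← pow_succ']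
              simp only [Pi.smul_apply, smul_eq_mul, pow_succ]
              ring
            · rw [dif_neg h, add_zero, hE0def]
              simp only [blk4_3]
              show Jσ.mulVec (((-1:ℝ))^(i : ℕ) • ((Jσ ^ (i : ℕ)).mulVec u)) rσ = 0
              have hni : (i : ℕ) = n := by omega
              rw [Matrix.mulVec_smul, Matrix.mulVec_mulVec, ← pow_succ', hni, hJn1]
              simp
          · by_cases h : (i : ℕ) + 1 < n + 1
            · rw [dif_pos h, hE0def, hA0def]
              simp only [blk4_4]
              show Eη.mulVec (fun _ => (0:ℝ)) rη + Aη.mulVec (fun _ => (0:ℝ)) rη = 0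
              rw [mulVec_zfun, mulVec_zfun, add_zero]
            · rw [dif_neg h, add_zero, hE0def]
              simp only [blk4_4]
              show Eη.mulVec (fun _ => (0:ℝ)) rη = 0
              exact mulVec_zfun _ _
        have hP := P x hx0
        have hval : K0.mulVec (fun c => x (⟨1, hk⟩, c)) = -((Kσ * Jσ).mulVec u) := by
          rw [hK0def, cols4]
          funext i0
          show Kε.mulVec (fun _ => (0:ℝ)) i0
            + (Kf.mulVec (fun _ => (0:ℝ)) i0
              + (Kσ.mulVec (((-1:ℝ))^(1:ℕ) • ((Jσ ^ (1:ℕ)).mulVec u)) i0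
                + Kη.mulVec (fun _ => (0:ℝ)) i0)) = -((Kσ * Jσ).mulVec u) i0
          rw [mulVec_zfun, mulVec_zfun, mulVec_zfun]
          have hsm : ((-1:ℝ))^(1:ℕ) • ((Jσ ^ (1:ℕ)).mulVec u) = -(Jσ.mulVec u) := by
            funext c; simp [pow_one]
          rw [hsm, Matrix.mulVec_neg, Matrix.mulVec_mulVec]
          simp
        rw [hval] at hP
        exact neg_eq_zero.mp hP
      ext i0 c
      have := congrFun (key (Pi.single c 1)) i0
      rw [Matrix.mulVec_single] at this
      simpa using this
    · -- Kε = 0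
      have key : ∀ v : Fin nε → ℝ, Kε.mulVec v = 0 := by
        intro v
        obtain ⟨w₀, hw₀⟩ := aux_surj_of_rank_rows Eε hEε (-(Aε.mulVec v))
        obtain ⟨w, hwv, hwchain, hwend⟩ :=
          aux_chain_exists Eε Aε hεpencil hEε (n - 1) (by omega) v
        set x : Fin (n + 1) × (Fin nε ⊕ (Fin nf ⊕ (Fin nσ ⊕ Fin nη))) → ℝ :=
          fun p => Sum.elim
            (fun c => if (p.1 : ℕ) = 0 then w₀ c else w ((p.1 : ℕ) - 1) c)
            (Sum.elim (fun _ => (0:ℝ)) (Sum.elim (fun _ => (0:ℝ)) (fun _ => (0:ℝ)))) p.2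
          with hxdef
        have hx0 : (Fmat (n + 1) E0 A0).mulVec x = 0 := by
          funext p
          obtain ⟨i, rr⟩ := p
          rw [Fmat_mulVec_apply]
          show E0.mulVec (fun c => x (i, c)) rr
            + (if h : (i : ℕ) + 1 < n + 1
                then A0.mulVec (fun c => x (⟨(i:ℕ) + 1, h⟩, c)) rr else 0) = 0
          rcases rr with rε | rf | rσ | rη
          · by_cases h : (i : ℕ) + 1 < n + 1
            · rw [dif_pos h, hE0def, hA0def]
              simp only [blk4_1]
              show Eε.mulVec (fun c => if (i:ℕ) = 0 then w₀ c else w ((i:ℕ) - 1) c) rε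
                + Aε.mulVec (fun c => if ((i:ℕ)+1) = 0 then w₀ c else w (((i:ℕ)+1) - 1) c) rε
                  = 0
              by_cases h0 : (i : ℕ) = 0
              · have e1 : (fun c => if (i:ℕ) = 0 then w₀ c else w ((i:ℕ) - 1) c) = w₀ := by
                  funext c; rw [if_pos h0]
                have e2 : (fun c => if ((i:ℕ)+1) = 0 then w₀ c else w (((i:ℕ)+1) - 1) c)
                    = w 0 := by
                  funext c; rw [if_neg (Nat.succ_ne_zero _),
                    show (i:ℕ) + 1 - 1 = 0 from by omega]
                rw [e1, e2, hwv]
                have := congrFun hw₀ rε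
                rw [Matrix.mulVecLin_apply] at this
                rw [this]
                simp
              · have e1 : (fun c => if (i:ℕ) = 0 then w₀ c else w ((i:ℕ) - 1) c)
                    = w ((i:ℕ) - 1) := by
                  funext c; rw [if_neg h0]
                have e2 : (fun c => if ((i:ℕ)+1) = 0 then w₀ c else w (((i:ℕ)+1) - 1) c)
                    = w (((i:ℕ) - 1) + 1) := by
                  funext c; rw [if_neg (Nat.succ_ne_zero _),
                    show (i:ℕ) + 1 - 1 = (i:ℕ) - 1 + 1 from by omega]
                rw [e1, e2]
                have hlt : (i:ℕ) - 1 < n - 1 := by omega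
                have := congrFun (hwchain ((i:ℕ) - 1) hlt) rε
                simpa using this
            · rw [dif_neg h, add_zero, hE0def]
              simp only [blk4_1]
              show Eε.mulVec (fun c => if (i:ℕ) = 0 then w₀ c else w ((i:ℕ) - 1) c) rε = 0
              have hni : (i : ℕ) = n := by omega
              have e1 : (fun c => if (i:ℕ) = 0 then w₀ c else w ((i:ℕ) - 1) c)
                  = w (n - 1) := by
                funext c; rw [if_neg (by omega), show (i:ℕ) - 1 = n - 1 from by omega]
              rw [e1]
              exact congrFun hwend rε
          · by_cases h : (i : ℕ) + 1 < n + 1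
            · rw [dif_pos h, hE0def, hA0def]
              simp only [blk4_2, Matrix.one_mulVec]
              show (0:ℝ) + Jf.mulVec (fun _ => (0:ℝ)) rf = 0
              rw [mulVec_zfun, add_zero]
            · rw [dif_neg h, add_zero, hE0def]
              simp only [blk4_2, Matrix.one_mulVec]
              rfl
          · by_cases h : (i : ℕ) + 1 < n + 1
            · rw [dif_pos h, hE0def, hA0def]
              simp only [blk4_3, Matrix.one_mulVec]
              show Jσ.mulVec (fun _ => (0:ℝ)) rσ + (0:ℝ) = 0
              rw [mulVec_zfun, add_zero]
            · rw [dif_neg h, add_zero, hE0def]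
              simp only [blk4_3]
              show Jσ.mulVec (fun _ => (0:ℝ)) rσ = 0
              exact mulVec_zfun _ _
          · by_cases h : (i : ℕ) + 1 < n + 1
            · rw [dif_pos h, hE0def, hA0def]
              simp only [blk4_4]
              show Eη.mulVec (fun _ => (0:ℝ)) rη + Aη.mulVec (fun _ => (0:ℝ)) rη = 0
              rw [mulVec_zfun, mulVec_zfun, add_zero]
            · rw [dif_neg h, add_zero, hE0def]
              simp only [blk4_4]
              show Eη.mulVec (fun _ => (0:ℝ)) rη = 0
              exact mulVec_zfun _ _
        have hP := P x hx0
        have hval : K0.mulVec (fun c => x (⟨1, hk⟩, c)) = Kε.mulVec v := by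
          rw [hK0def, cols4]
          funext i0
          show Kε.mulVec (fun c => if (1:ℕ) = 0 then w₀ c else w (1 - 1) c) i0
            + (Kf.mulVec (fun _ => (0:ℝ)) i0
              + (Kσ.mulVec (fun _ => (0:ℝ)) i0 + Kη.mulVec (fun _ => (0:ℝ)) i0))
              = Kε.mulVec v i0
          rw [mulVec_zfun, mulVec_zfun, mulVec_zfun]
          have e1 : (fun c => if (1:ℕ) = 0 then w₀ c else w (1 - 1) c) = v := by
            funext c
            rw [if_neg one_ne_zero]
            exact congrFun hwv c
          rw [e1]
          ring
        rw [hval] at hP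
        exact hP
      ext i0 c
      have := congrFun (key (Pi.single c 1)) i0
      rw [Matrix.mulVec_single] at this
      simpa using this
  · -- the two equations imply the rank condition
    rintro ⟨hKσJ, hKε⟩ x hx
    have heq : ∀ (i : Fin (n + 1)) rr,
        E0.mulVec (fun c => x (i, c)) rr
          + (if h : (i : ℕ) + 1 < n + 1
              then A0.mulVec (fun c => x (⟨(i:ℕ) + 1, h⟩, c)) rr else 0) = 0 := by
      intro i rr
      have := congrFun hx (i, rr)
      rw [Fmat_mulVec_apply] at this
      exact this
    -- the η-component vanishes everywhere
    have hinjη : Function.Injective Eη.mulVecLin := aux_inj_of_rank_cols Eη hEη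
    have hη : ∀ t, t ≤ n → ∀ c,
        x (⟨n - t, by omega⟩, Sum.inr (Sum.inr (Sum.inr c))) = 0 := by
      intro t
      induction t with
      | zero =>
          intro _ c
          have hvec : (fun c' => x ((⟨n, by omega⟩ : Fin (n+1)),
              Sum.inr (Sum.inr (Sum.inr c')))) = 0 := by
            apply hinjη
            rw [map_zero]
            funext s
            have h1 := heq ⟨n, by omega⟩ (Sum.inr (Sum.inr (Sum.inr s)))
            rw [dif_neg (by simp), hE0def] at h1
            simp only [blk4_4, add_zero] at h1
            exact h1
          exact congrFun hvec c
      | succ t ih =>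
          intro ht c
          have hlt : (n - (t+1)) + 1 < n + 1 := by omega
          have hnext : (fun c' => x ((⟨(n - (t+1)) + 1, hlt⟩ : Fin (n+1)),
              Sum.inr (Sum.inr (Sum.inr c')))) = fun _ => (0:ℝ) := by
            funext c'
            have hfin : (⟨(n - (t+1)) + 1, hlt⟩ : Fin (n+1)) = ⟨n - t, by omega⟩ :=
              Fin.ext (show n - (t+1) + 1 = n - t from by omega)
            rw [hfin]
            exact ih (by omega) c'
          have hvec : (fun c' => x ((⟨n - (t+1), by omega⟩ : Fin (n+1)),
              Sum.inr (Sum.inr (Sum.inr c')))) = 0 := by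
            apply hinjη
            rw [map_zero]
            funext s
            have h1 := heq ⟨n - (t+1), by omega⟩ (Sum.inr (Sum.inr (Sum.inr s)))
            rw [dif_pos hlt, hE0def, hA0def] at h1
            simp only [blk4_4] at h1
            rw [hnext, mulVec_zfun, add_zero] at h1
            exact h1
          exact congrFun hvec c
    -- the f-component vanishes everywhere
    have hf : ∀ t, t ≤ n → ∀ c,
        x (⟨n - t, by omega⟩, Sum.inr (Sum.inl c)) = 0 := by
      intro t
      induction t with
      | zero =>
          intro _ c
          have h1 := heq ⟨n, by omega⟩ (Sum.inr (Sum.inl c))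
          rw [dif_neg (by simp), hE0def] at h1
          simp only [blk4_2, Matrix.one_mulVec, add_zero] at h1
          exact h1
      | succ t ih =>
          intro ht c
          have hlt : (n - (t+1)) + 1 < n + 1 := by omega
          have hnext : (fun c' => x ((⟨(n - (t+1)) + 1, hlt⟩ : Fin (n+1)),
              Sum.inr (Sum.inl c'))) = fun _ => (0:ℝ) := by
            funext c'
            have hfin : (⟨(n - (t+1)) + 1, hlt⟩ : Fin (n+1)) = ⟨n - t, by omega⟩ :=
              Fin.ext (show n - (t+1) + 1 = n - t from by omega)
            rw [hfin]
            exact ih (by omega) c'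
          have h1 := heq ⟨n - (t+1), by omega⟩ (Sum.inr (Sum.inl c))
          rw [dif_pos hlt, hE0def, hA0def] at h1
          simp only [blk4_2, Matrix.one_mulVec] at h1
          rw [hnext, mulVec_zfun, add_zero] at h1
          exact h1
    -- σ-component at time 1
    have h01 : (0:ℕ) + 1 < n + 1 := by omega
    have hσ1 : ∀ c, x ((⟨1, hk⟩ : Fin (n+1)), Sum.inr (Sum.inr (Sum.inl c)))
        = -(Jσ.mulVec (fun c' => x ((⟨0, by omega⟩ : Fin (n+1)),
            Sum.inr (Sum.inr (Sum.inl c')))) c) := by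
      intro c
      have h1 := heq ⟨0, by omega⟩ (Sum.inr (Sum.inr (Sum.inl c)))
      rw [dif_pos h01, hE0def, hA0def] at h1
      simp only [blk4_3, Matrix.one_mulVec] at h1
      have hfin : (⟨(0:ℕ) + 1, h01⟩ : Fin (n+1)) = ⟨1, hk⟩ := rfl
      rw [hfin] at h1
      linarith [h1]
    -- conclude
    rw [hK0def, cols4]
    funext i0
    have hfe : (fun c => x ((⟨1, hk⟩ : Fin (n+1)), Sum.inr (Sum.inl c))) = fun _ => (0:ℝ) := by
      funext c
      have := hf (n - 1) (by omega) c
      have hfin : (⟨n - (n - 1), by omega⟩ : Fin (n+1)) = ⟨1, hk⟩ :=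
        Fin.ext (show n - (n - 1) = 1 from by omega)
      rw [hfin] at this
      exact this
    have hηe : (fun c => x ((⟨1, hk⟩ : Fin (n+1)), Sum.inr (Sum.inr (Sum.inr c))))
        = fun _ => (0:ℝ) := by
      funext c
      have := hη (n - 1) (by omega) c
      have hfin : (⟨n - (n - 1), by omega⟩ : Fin (n+1)) = ⟨1, hk⟩ :=
        Fin.ext (show n - (n - 1) = 1 from by omega)
      rw [hfin] at this
      exact this
    have hσe : (fun c => x ((⟨1, hk⟩ : Fin (n+1)), Sum.inr (Sum.inr (Sum.inl c))))
        = -(Jσ.mulVec (fun c' => x ((⟨0, by omega⟩ : Fin (n+1)),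
            Sum.inr (Sum.inr (Sum.inl c'))))) := funext hσ1
    show Kε.mulVec (fun c => x ((⟨1, hk⟩ : Fin (n+1)), Sum.inl c)) i0
      + (Kf.mulVec (fun c => x ((⟨1, hk⟩ : Fin (n+1)), Sum.inr (Sum.inl c))) i0
        + (Kσ.mulVec (fun c => x ((⟨1, hk⟩ : Fin (n+1)), Sum.inr (Sum.inr (Sum.inl c)))) i0
          + Kη.mulVec (fun c => x ((⟨1, hk⟩ : Fin (n+1)), Sum.inr (Sum.inr (Sum.inr c)))) i0))
        = (0 : Fin r → ℝ) i0
    rw [hfe, hηe, hσe, hKε, Matrix.zero_mulVec, mulVec_zfun, mulVec_zfun,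
      Matrix.mulVec_neg, Matrix.mulVec_mulVec, hKσJ, Matrix.zero_mulVec]
    simp
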